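/- The map A₄(ε, δ, η) = (1 - ε(1-η)/(1-δ-η), ε, δ) on ℝ³ has order 6: six-fold application returns any point to itself, assuming all intermediate denominators are nonzero. -/

import Mathlib

/-- Vertex reflection of 4-dimensional generalized regular polytopes. -/
noncomputable def refA4 : ℝ × ℝ × ℝ → ℝ × ℝ × ℝ :=
  fun p => (1 - p.1 * (1 - p.2.2) / (1 - p.2.1 - p.2.2), p.1, p.2.1)

theorem refA4_order_six (ε δ η : ℝ)
    (h : ∀ k < 6, 1 - (refA4^[k] (ε, δ, η)).2.1 - (refA4^[k] (ε, δ, η)).2.2 ≠ 0) :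
    refA4^[6] (ε, δ, η) = (ε, δ, η) := by
  have h0 := h 0 (by norm_num)
  have h1 := h 1 (by norm_num)
  have h2 := h 2 (by norm_num)
  have h3 := h 3 (by norm_num)
  have h4 := h 4 (by norm_num)
  have h5 := h 5 (by norm_num)
  simp only [Function.iterate_zero, id_eq] at h0
  set d0 := 1 - δ - η with hd0
  set d1 := 1 - ε - δ with hd1
  set n1 := 1 - ε - δ - η + ε * η with hn1
  have e1 : refA4^[1] (ε, δ, η) = (n1 / d0, ε, δ) := by
    simp only [Function.iterate_one, refA4]
    refine Prod.ext ?_ rfl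
    simp only [d0, d1, n1] at *; field_simp
    ring
  rw [e1] at h1; dsimp only at h1
  have e2 : refA4^[2] (ε, δ, η) = (ε * δ * η / (d1 * d0), n1 / d0, ε) := by
    rw [show (2 : ℕ) = 1 + 1 from rfl, Function.iterate_succ_apply', e1]
    simp only [refA4]
    refine Prod.ext ?_ rfl
    simp only [d0, d1, n1] at *; field_simp
    ring
  rw [e2] at h2; dsimp only at h2
  have key2 : 1 - n1 / d0 - ε = ε * δ / d0 := by simp only [d0, d1, n1] at *; field_simp; ring
  rw [key2] at h2
  have hεδ : ε * δ ≠ 0 := fun H => h2 (by rw [H]; simp)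
  have hε : ε ≠ 0 := left_ne_zero_of_mul hεδ
  have hδ : δ ≠ 0 := right_ne_zero_of_mul hεδ
  have e3 : refA4^[3] (ε, δ, η) = (n1 / d1, ε * δ * η / (d1 * d0), n1 / d0) := by
    rw [show (3 : ℕ) = 2 + 1 from rfl, Function.iterate_succ_apply', e2]
    simp only [refA4]
    refine Prod.ext ?_ rfl
    rw [key2]
    simp only [d0, d1, n1] at *; field_simp
    ring
  rw [e3] at h3; dsimp only at h3
  have key3 : 1 - ε * δ * η / (d1 * d0) - n1 / d0 = ε * n1 / (d1 * d0) := by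
    simp only [d0, d1, n1] at *; field_simp; ring
  rw [key3] at h3
  have hn1ne : n1 ≠ 0 := fun H => h3 (by rw [H]; simp)
  have e4 : refA4^[4] (ε, δ, η) = (η, n1 / d1, ε * δ * η / (d1 * d0)) := by
    rw [show (4 : ℕ) = 3 + 1 from rfl, Function.iterate_succ_apply', e3]
    simp only [refA4]
    refine Prod.ext ?_ rfl
    rw [key3]
    simp only [d0, d1, n1] at *; field_simp
    ring
  rw [e4] at h4; dsimp only at h4
  have key4 : 1 - n1 / d1 - ε * δ * η / (d1 * d0) = η * n1 / (d1 * d0) := by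
    simp only [d0, d1, n1] at *; field_simp; ring
  rw [key4] at h4
  have hη : η ≠ 0 := fun H => h4 (by rw [H]; simp)
  have e5 : refA4^[5] (ε, δ, η) = (δ, η, n1 / d1) := by
    rw [show (5 : ℕ) = 4 + 1 from rfl, Function.iterate_succ_apply', e4]
    simp only [refA4]
    refine Prod.ext ?_ rfl
    rw [key4]
    simp only [d0, d1, n1] at *
    rw [div_div_eq_mul_div, one_sub_div (by simp [*]), div_eq_iff (by simp [*])]
    field_simp
    ring
  have key5 : 1 - η - n1 / d1 = δ * η / d1 := by simp only [d0, d1, n1] at *; field_simp; ring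
  rw [show (6 : ℕ) = 5 + 1 from rfl, Function.iterate_succ_apply', e5]
  simp only [refA4]
  refine Prod.ext ?_ rfl
  rw [key5]
  simp only [d0, d1, n1] at *; field_simp
  ring
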